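/- Every decision problem in NP is solvable by an orchestrated machine OrchMach1 in polynomial time; i.e., NP ⊆ OM1P, where OM1P is the class of languages decided by some orchestrated machine with polynomially bounded accepting computations. This follows from the deterministic decomposition theorem: every polynomial-time NDTM is equivalent to the orchestrated machine built from its deterministic resolutions, and the simulation preserves computation length step-for-step. -/
import Mathlib


abbrev Stt := ℕ
abbrev Dir := Fin 3

def moveInt (d : Dir) : ℤ := (d.val : ℤ) - 1

abbrev Rule (Γ : Type) := (Stt × Γ) × (Stt × Γ × Dir)
abbrev Machine (Γ : Type) := Finset (Rule Γ)

structure Cfg (Γ : Type) where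
  state : Stt
  tape : ℤ → Γ
  head : ℤ

def Cfg.F {Γ : Type} (c : Cfg Γ) : Stt × Γ := (c.state, c.tape c.head)

def applyRule {Γ : Type} (c : Cfg Γ) (T : Stt × Γ × Dir) : Cfg Γ :=
  ⟨T.1, Function.update c.tape c.head T.2.1, c.head + moveInt T.2.2⟩

def applicable {Γ : Type} [DecidableEq Γ] (F : Stt × Γ) (G : Machine Γ) : Prop :=
  ∃ r ∈ G, r.1 = F

instance {Γ : Type} [DecidableEq Γ] (F : Stt × Γ) (G : Machine Γ) :
    Decidable (applicable F G) := by unfold applicable; infer_instance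

def survivors {Γ : Type} [DecidableEq Γ] (p : Finset (Machine Γ) × Cfg Γ) :
    Finset (Machine Γ) :=
  p.1.filter (fun G => applicable p.2.F G)

def OrchStep {Γ : Type} [DecidableEq Γ] (p q : Finset (Machine Γ) × Cfg Γ) : Prop :=
  ∃ G ∈ survivors p, ∃ T, (p.2.F, T) ∈ G ∧ q = (survivors p, applyRule p.2 T)

def RunFrom {Γ : Type} [DecidableEq Γ] (H : Finset (Machine Γ)) (c0 : Cfg Γ)
    (f : ℕ → Finset (Machine Γ) × Cfg Γ) (N : ℕ) : Prop :=
  f 0 = (H, c0) ∧ ∀ i < N, OrchStep (f i) (f (i + 1))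

def HaltsAtFrom {Γ : Type} [DecidableEq Γ] (H : Finset (Machine Γ)) (c0 : Cfg Γ)
    (f : ℕ → Finset (Machine Γ) × Cfg Γ) (N : ℕ) : Prop :=
  RunFrom H c0 f N ∧ survivors (f N) = ∅

abbrev Breed := Finset (Machine Bool)

def initCfg : Cfg Bool := ⟨0, fun _ => false, 0⟩

def Run (H : Breed) (f : ℕ → Breed × Cfg Bool) (N : ℕ) : Prop :=
  RunFrom H initCfg f N

def HaltsAt (H : Breed) (f : ℕ → Breed × Cfg Bool) (N : ℕ) : Prop :=
  HaltsAtFrom H initCfg f N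

def Halts (H : Breed) : Prop := ∃ f N, HaltsAt H f N

def Divergent (H : Breed) : Prop := ∀ K : ℕ, ∃ f N, K ≤ N ∧ Run H f N

def Convergent (H : Breed) : Prop :=
  ¬ ∃ f : ℕ → Breed × Cfg Bool, f 0 = (H, initCfg) ∧ ∀ i, OrchStep (f i) (f (i + 1))

def initCfg2 (w : List Bool) : Cfg (Option Bool) :=
  ⟨0, fun i => if i < 0 then none else w[i.toNat]?, 0⟩

abbrev Breed2 := Finset (Machine (Option Bool))

def Run2 (H : Breed2) (w : List Bool) (f : ℕ → Breed2 × Cfg (Option Bool)) (N : ℕ) : Prop :=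
  RunFrom H (initCfg2 w) f N

def HaltsAt2 (H : Breed2) (w : List Bool) (f : ℕ → Breed2 × Cfg (Option Bool)) (N : ℕ) : Prop :=
  HaltsAtFrom H (initCfg2 w) f N

def Lang2 (H : Breed2) : Set (List Bool) := {w | ∃ f N, HaltsAt2 H w f N}


/-- A rule set is deterministic: at most one right-hand side per left-hand side. -/
def DetM {Γ : Type} (G : Machine Γ) : Prop :=
  ∀ r ∈ G, ∀ r' ∈ G, r.1 = r'.1 → r.2 = r'.2

instance {Γ : Type} [DecidableEq Γ] (G : Machine Γ) : Decidable (DetM G) := by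
  unfold DetM; infer_instance

/-- A (partial) run of a nondeterministic Turing machine `U` from configuration `c0`. -/
def NDRunFrom {Γ : Type} [DecidableEq Γ] (U : Machine Γ) (c0 : Cfg Γ)
    (f : ℕ → Cfg Γ) (N : ℕ) : Prop :=
  f 0 = c0 ∧ ∀ i < N, ∃ T, ((f i).F, T) ∈ U ∧ f (i + 1) = applyRule (f i) T

/-- A halting computation of the NDTM `U`: after `N` steps no rule is applicable. -/
def NDHaltsAtFrom {Γ : Type} [DecidableEq Γ] (U : Machine Γ) (c0 : Cfg Γ)
    (f : ℕ → Cfg Γ) (N : ℕ) : Prop :=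
  NDRunFrom U c0 f N ∧ ¬ applicable (f N).F U

/-- `L ∈ NP`: some NDTM decides `L` with accepting (halting) computations of
length bounded by a polynomial in the input length. -/
def InNP (L : Set (List Bool)) : Prop :=
  ∃ (U : Machine (Option Bool)) (p : Polynomial ℕ),
    ∀ w, w ∈ L ↔ ∃ f N, NDHaltsAtFrom U (initCfg2 w) f N ∧ N ≤ p.eval w.length

/-- `L ∈ OM1P`: some finite breed of deterministic machines decides `L` by
orchestrated computations of polynomially bounded length. -/
def InOM1P (L : Set (List Bool)) : Prop :=
  ∃ (H : Breed2) (p : Polynomial ℕ), (∀ G ∈ H, DetM G) ∧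
    ∀ w, w ∈ L ↔ ∃ f N, HaltsAt2 H w f N ∧ N ≤ p.eval w.length

/-- The breed of all deterministic full resolutions of `U`. -/
def Resolutions (U : Machine (Option Bool)) : Breed2 :=
  U.powerset.filter (fun G => DetM G ∧ ∀ r ∈ U, applicable r.1 G)

open Classical in
noncomputable def pickRhs (U : Machine (Option Bool)) (F0 : Stt × Option Bool)
    (T0 : Stt × Option Bool × Dir) (F : Stt × Option Bool) : Stt × Option Bool × Dir :=
  if F = F0 then T0
  else if h : ∃ T, (F, T) ∈ U then h.choose else default

noncomputable def resOf (U : Machine (Option Bool)) (F0 : Stt × Option Bool)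
    (T0 : Stt × Option Bool × Dir) : Machine (Option Bool) :=
  U.image (fun r => (r.1, pickRhs U F0 T0 r.1))

lemma pickRhs_mem (U : Machine (Option Bool)) {F0 T0} (h0 : (F0, T0) ∈ U)
    {F : Stt × Option Bool} (h : ∃ T, (F, T) ∈ U) : (F, pickRhs U F0 T0 F) ∈ U := by
  unfold pickRhs
  by_cases heq : F = F0
  · rw [if_pos heq]; subst heq; exact h0
  · rw [if_neg heq, dif_pos h]; exact h.choose_spec

lemma resOf_mem_resolutions (U : Machine (Option Bool)) {F0 T0} (h0 : (F0, T0) ∈ U) :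
    resOf U F0 T0 ∈ Resolutions U ∧ (F0, T0) ∈ resOf U F0 T0 := by
  have hsub : resOf U F0 T0 ⊆ U := by
    intro x hx
    simp only [resOf, Finset.mem_image] at hx
    obtain ⟨r, hr, rfl⟩ := hx
    exact pickRhs_mem U h0 ⟨r.2, hr⟩
  constructor
  · simp only [Resolutions, Finset.mem_filter, Finset.mem_powerset]
    refine ⟨hsub, ?_, ?_⟩
    · intro r hr r' hr' hfe
      simp only [resOf, Finset.mem_image] at hr hr'
      obtain ⟨a, _, rfl⟩ := hr
      obtain ⟨b, _, rfl⟩ := hr'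
      simp only at hfe ⊢
      rw [hfe]
    · intro r hr
      exact ⟨(r.1, pickRhs U F0 T0 r.1), Finset.mem_image_of_mem _ hr, rfl⟩
  · have := Finset.mem_image_of_mem (fun r => (r.1, pickRhs U F0 T0 r.1)) h0
    simpa [resOf, pickRhs] using this

lemma resolutions_subset {U G : Machine (Option Bool)} (h : G ∈ Resolutions U) : G ⊆ U := by
  simp only [Resolutions, Finset.mem_filter, Finset.mem_powerset] at h
  exact h.1

lemma resolutions_full {U G : Machine (Option Bool)} (h : G ∈ Resolutions U) :
    ∀ r ∈ U, applicable r.1 G := by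
  simp only [Resolutions, Finset.mem_filter, Finset.mem_powerset] at h
  exact h.2.2

lemma survivors_eq_of_applicable (U : Machine (Option Bool)) (c : Cfg (Option Bool))
    (h : applicable c.F U) :
    survivors ((Resolutions U, c) : Breed2 × Cfg (Option Bool)) = Resolutions U := by
  apply Finset.filter_true_of_mem
  intro G hG
  obtain ⟨r, hr, hr1⟩ := h
  have := resolutions_full hG r hr
  rwa [hr1] at this

lemma not_applicable_of_survivors_empty (U : Machine (Option Bool)) (c : Cfg (Option Bool))
    (h : survivors ((Resolutions U, c) : Breed2 × Cfg (Option Bool)) = ∅) :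
    ¬ applicable c.F U := by
  rintro ⟨⟨F1, T1⟩, hr, hr1⟩
  obtain rfl : F1 = c.F := hr1
  obtain ⟨hmem, _⟩ := resOf_mem_resolutions U hr
  have happ : applicable c.F (resOf U c.F T1) := resolutions_full hmem _ hr
  have : resOf U c.F T1 ∈ survivors ((Resolutions U, c) : Breed2 × Cfg (Option Bool)) :=
    Finset.mem_filter.mpr ⟨hmem, happ⟩
  rw [h] at this
  exact absurd this (Finset.notMem_empty _)

lemma survivors_empty_of_not_applicable (U : Machine (Option Bool)) (c : Cfg (Option Bool))
    (h : ¬ applicable c.F U) :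
    survivors ((Resolutions U, c) : Breed2 × Cfg (Option Bool)) = ∅ := by
  apply Finset.filter_false_of_mem
  intro G hG ⟨r, hr, hr1⟩
  exact h ⟨r, resolutions_subset hG hr, hr1⟩

/-- `NP ⊆ OM1P`: every decision problem in NP is solvable by
an orchestrated machine in polynomial time. -/
theorem NP_subset_OM1P : ∀ L : Set (List Bool), InNP L → InOM1P L := by
  intro L ⟨U, p, hU⟩
  refine ⟨Resolutions U, p, ?_, ?_⟩
  · intro G hG
    simp only [Resolutions, Finset.mem_filter, Finset.mem_powerset] at hG
    exact hG.2.1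
  · intro w
    rw [hU w]
    constructor
    · rintro ⟨f, N, ⟨⟨hf0, hstep⟩, hhalt⟩, hN⟩
      refine ⟨fun i => (Resolutions U, f i), N, ⟨⟨?_, ?_⟩, ?_⟩, hN⟩
      · show ((Resolutions U, f 0) : Breed2 × Cfg (Option Bool)) = _
        rw [hf0]
      · intro i hi
        obtain ⟨T, hT, hnext⟩ := hstep i hi
        have happ : applicable (f i).F U := ⟨((f i).F, T), hT, rfl⟩
        have hsv : survivors ((Resolutions U, f i) : Breed2 × Cfg (Option Bool))
            = Resolutions U := survivors_eq_of_applicable U (f i) happ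
        obtain ⟨hmem, hrule⟩ := resOf_mem_resolutions U hT
        refine ⟨resOf U (f i).F T, ?_, T, hrule, ?_⟩
        · show resOf U (f i).F T ∈
            survivors ((Resolutions U, f i) : Breed2 × Cfg (Option Bool))
          rw [hsv]; exact hmem
        · show ((Resolutions U, f (i + 1)) : Breed2 × Cfg (Option Bool)) =
            (survivors ((Resolutions U, f i) : Breed2 × Cfg (Option Bool)),
              applyRule (f i) T)
          rw [hsv, hnext]
      · exact survivors_empty_of_not_applicable U (f N) hhalt
    · rintro ⟨g, N, ⟨⟨hg0, hstep⟩, hhalt⟩, hN⟩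
      have hfst : ∀ i ≤ N, (g i).1 = Resolutions U := by
        intro i
        induction i with
        | zero => intro _; rw [hg0]
        | succ k ih =>
          intro hk
          have hkN : k < N := Nat.lt_of_succ_le hk
          have hk1 : (g k).1 = Resolutions U := ih (Nat.le_of_lt hkN)
          obtain ⟨G, hG, T, hT, hnext⟩ := hstep k hkN
          have hGres : G ∈ Resolutions U := by
            have := (Finset.mem_filter.mp hG).1
            rwa [hk1] at this
          have happ : applicable (g k).2.F U :=
            ⟨((g k).2.F, T), resolutions_subset hGres hT, rfl⟩
          have hsv : survivors (g k) = Resolutions U := by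
            have heq : survivors (g k)
                = survivors ((Resolutions U, (g k).2) : Breed2 × Cfg (Option Bool)) := by
              unfold survivors; rw [hk1]
            rw [heq]
            exact survivors_eq_of_applicable U (g k).2 happ
          rw [hnext]
          exact hsv
      refine ⟨fun i => (g i).2, N, ⟨⟨?_, ?_⟩, ?_⟩, hN⟩
      · show (g 0).2 = initCfg2 w
        rw [hg0]
      · intro i hi
        obtain ⟨G, hG, T, hT, hnext⟩ := hstep i hi
        have hGres : G ∈ Resolutions U := by
          have := (Finset.mem_filter.mp hG).1
          rwa [hfst i (Nat.le_of_lt hi)] at this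
        refine ⟨T, resolutions_subset hGres hT, ?_⟩
        show (g (i + 1)).2 = applyRule (g i).2 T
        rw [hnext]
      · show ¬ applicable (g N).2.F U
        apply not_applicable_of_survivors_empty U (g N).2
        have heq : survivors (g N)
            = survivors ((Resolutions U, (g N).2) : Breed2 × Cfg (Option Bool)) := by
          unfold survivors; rw [hfst N le_rfl]
        rw [← heq]
        exact hhalt
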